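/- Let Y₁, Y₂ be independent N(0,1) random variables and Z = 1/(Y₁Y₂). Then Z has density f_Z(z) = (1/(π z²)) K₀(1/|z|) for z ≠ 0, where K₀ is the modified Bessel function of the second kind of order 0. -/

import Mathlib

open MeasureTheory ProbabilityTheory Real Set
open scoped ENNReal NNReal

/-- The modified Bessel function of the second kind of order 0,
`K₀(x) = ∫_0^∞ exp(-x cosh t) dt`. -/
noncomputable def besselK0 (x : ℝ) : ℝ :=
  ∫ t in Set.Ioi (0 : ℝ), Real.exp (-(x * Real.cosh t))

/-- 1D lintegral change of variables. -/
theorem lintegral_image_eq_lintegral_abs_deriv_mul' {s : Set ℝ} {f f' : ℝ → ℝ}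
    (hs : MeasurableSet s) (hf' : ∀ x ∈ s, HasDerivWithinAt f (f' x) s x)
    (hf : InjOn f s) (g : ℝ → ℝ≥0∞) :
    ∫⁻ x in f '' s, g x = ∫⁻ x in s, ENNReal.ofReal |f' x| * g (f x) := by
  simpa only [ContinuousLinearMap.det_toSpanSingleton] using
    lintegral_image_eq_lintegral_abs_det_fderiv_mul volume hs
      (fun x hx => (hf' x hx).hasFDerivWithinAt) hf g

theorem lintegral_Iio_zero_neg (g : ℝ → ℝ≥0∞) :
    ∫⁻ x in Iio (0:ℝ), g x = ∫⁻ x in Ioi (0:ℝ), g (-x) := by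
  have himg : (fun x : ℝ => -x) '' Ioi 0 = Iio 0 := by
    ext y; simp only [mem_image, mem_Ioi, mem_Iio]
    constructor
    · rintro ⟨x, hx, rfl⟩; linarith
    · intro hy; exact ⟨-y, by linarith, by ring⟩
  rw [← himg]
  rw [lintegral_image_eq_lintegral_abs_deriv_mul' (f' := fun _ => (-1:ℝ))
    measurableSet_Ioi (fun x _ => (hasDerivAt_neg x).hasDerivWithinAt)
    (fun a _ b _ h => by simpa using h) g]
  simp

theorem lintegral_even (g : ℝ → ℝ≥0∞) (hg : ∀ x, g (-x) = g x) :
    ∫⁻ x, g x = 2 * ∫⁻ x in Ioi (0:ℝ), g x := by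
  have h0 : ((Iio (0:ℝ) ∪ Ioi 0 : Set ℝ)) =ᵐ[volume] (univ : Set ℝ) := by
    rw [Iio_union_Ioi]
    rw [MeasureTheory.ae_eq_univ]
    simp
  calc ∫⁻ x, g x = ∫⁻ x in (univ : Set ℝ), g x := by rw [setLIntegral_univ]
    _ = ∫⁻ x in Iio (0:ℝ) ∪ Ioi 0, g x := by
        rw [setLIntegral_congr h0]
    _ = (∫⁻ x in Iio (0:ℝ), g x) + ∫⁻ x in Ioi (0:ℝ), g x := by
        rw [lintegral_union measurableSet_Ioi ((Iic_disjoint_Ioi (le_refl (0:ℝ))).mono_left Iio_subset_Iic_self)]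
    _ = 2 * ∫⁻ x in Ioi (0:ℝ), g x := by
        rw [lintegral_Iio_zero_neg]
        simp only [hg]
        rw [two_mul]

theorem integrableOn_exp_neg_cosh {u : ℝ} (hu : 0 < u) :
    IntegrableOn (fun t => rexp (-(u * Real.cosh t))) (Ioi (0:ℝ)) := by
  refine Integrable.mono' (exp_neg_integrableOn_Ioi 0 hu) ?_ ?_
  · exact (Real.continuous_exp.comp (by continuity)).aestronglyMeasurable
  · filter_upwards [ae_restrict_mem measurableSet_Ioi] with t ht
    rw [Real.norm_eq_abs, abs_of_nonneg (exp_nonneg _)]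
    apply exp_le_exp.2
    rw [neg_mul, neg_le_neg_iff]
    apply mul_le_mul_of_nonneg_left _ hu.le
    have h1 : t ≤ Real.sinh t := (Real.self_lt_sinh_iff.2 ht).le
    have h2 : Real.sinh t ≤ Real.cosh t := by
      rw [Real.sinh_eq, Real.cosh_eq]
      have := Real.exp_pos (-t)
      linarith
    linarith

theorem besselK0_nonneg (x : ℝ) : 0 ≤ besselK0 x :=
  integral_nonneg fun t => (exp_nonneg _)

theorem ofReal_besselK0 {u : ℝ} (hu : 0 < u) :
    ENNReal.ofReal (besselK0 u)
      = ∫⁻ t in Ioi (0:ℝ), ENNReal.ofReal (rexp (-(u * Real.cosh t))) := by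
  rw [besselK0, ofReal_integral_eq_lintegral_ofReal (integrableOn_exp_neg_cosh hu)
    (ae_of_all _ fun t => exp_nonneg _)]

theorem gauss_even (y : ℝ) : gaussianPDFReal 0 1 (-y) = gaussianPDFReal 0 1 y := by
  simp [gaussianPDFReal, neg_sq]

theorem bessel_sub {u c : ℝ} (hu : 0 < u) (hc : 0 ≤ c) :
    ∫⁻ t : ℝ, ENNReal.ofReal (c * rexp (-(u * Real.cosh t)))
      = ENNReal.ofReal (2 * (c * besselK0 u)) := by
  rw [lintegral_even _ (fun t => by rw [Real.cosh_neg])]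
  simp_rw [ENNReal.ofReal_mul hc]
  rw [lintegral_const_mul' _ _ ENNReal.ofReal_ne_top, ← ofReal_besselK0 hu,
    ← ENNReal.ofReal_mul hc, ← ENNReal.ofReal_ofNat 2,
    ← ENNReal.ofReal_mul (by norm_num)]

theorem pointwise_calc {u z t : ℝ} (hu : 0 < u) (hz : z ≠ 0) (huz : u = 1/|z|) :
    |Real.sqrt u * rexp (t/2) / 2| * (gaussianPDFReal 0 1 (Real.sqrt u * rexp (t/2)) *
      (gaussianPDFReal 0 1 (1/((Real.sqrt u * rexp (t/2))*z)) /
        (|Real.sqrt u * rexp (t/2)| * z^2)))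
    = (1/(4*π*z^2)) * rexp (-(u * Real.cosh t)) := by
  set x := Real.sqrt u * rexp (t/2) with hxdef
  have hx : (0:ℝ) < x := by positivity
  have hx2 : x^2 = u * rexp t := by
    rw [hxdef, mul_pow, Real.sq_sqrt hu.le, sq, ← Real.exp_add]
    ring_nf
  have hzabs : |z| = 1/u := by rw [huz]; field_simp
  have hz2 : z^2 = 1/u^2 := by
    rw [← sq_abs, hzabs, div_pow, one_pow]
  have hinv : (1/(x*z))^2 = u * rexp (-t) := by
    rw [div_pow, one_pow, mul_pow, hx2, hz2, Real.exp_neg]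
    have := Real.exp_pos t
    field_simp
  have hexp : rexp (-((x-0)^2/(2*(1:ℝ≥0)))) * rexp (-((1/(x*z)-0)^2/(2*(1:ℝ≥0))))
      = rexp (-(u * Real.cosh t)) := by
    rw [← Real.exp_add, Real.cosh_eq]
    congr 1
    push_cast
    rw [sub_zero, sub_zero, hx2, hinv]
    ring
  rw [abs_of_pos hx, abs_of_pos (by positivity : (0:ℝ) < x/2)]
  simp only [gaussianPDFReal]
  have hsq : (Real.sqrt (2*π*(1:ℝ≥0)))⁻¹ * (Real.sqrt (2*π*(1:ℝ≥0)))⁻¹ = (2*π)⁻¹ := by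
    rw [← mul_inv]
    push_cast
    rw [mul_one, Real.mul_self_sqrt (by positivity)]
  have hpi := Real.pi_pos
  calc x/2 * ((Real.sqrt (2*π*(1:ℝ≥0)))⁻¹ * rexp (-(x-0)^2/(2*(1:ℝ≥0))) *
        ((Real.sqrt (2*π*(1:ℝ≥0)))⁻¹ * rexp (-(1/(x*z)-0)^2/(2*(1:ℝ≥0))) / (x * z^2)))
      = ((Real.sqrt (2*π*(1:ℝ≥0)))⁻¹ * (Real.sqrt (2*π*(1:ℝ≥0)))⁻¹) / (2 * z^2) *
        (rexp (-((x-0)^2/(2*(1:ℝ≥0)))) * rexp (-((1/(x*z)-0)^2/(2*(1:ℝ≥0))))) := by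
        rw [neg_div, neg_div]
        field_simp
    _ = (1/(4*π*z^2)) * rexp (-(u * Real.cosh t)) := by
        rw [hexp, hsq]
        congr 1
        field_simp
        ring

theorem key1 {z : ℝ} (hz : z ≠ 0) :
    ∫⁻ x : ℝ, ENNReal.ofReal (gaussianPDFReal 0 1 x *
        (gaussianPDFReal 0 1 (1/(x*z)) / (|x| * z^2)))
      = ENNReal.ofReal ((1/(π*z^2)) * besselK0 (1/|z|)) := by
  have hzabs : (0:ℝ) < |z| := abs_pos.2 hz
  set u : ℝ := 1/|z| with hu_def
  have hu : 0 < u := by positivity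
  set ψ : ℝ → ℝ := fun t => Real.sqrt u * rexp (t/2) with hψ
  have hmono : StrictMono ψ := fun a b hab => by
    apply mul_lt_mul_of_pos_left (Real.exp_lt_exp.2 (by linarith)) (Real.sqrt_pos.2 hu)
  have himg : ψ '' univ = Ioi (0:ℝ) := by
    rw [image_univ]
    ext y
    simp only [mem_range, mem_Ioi]
    constructor
    · rintro ⟨t, rfl⟩; positivity
    · intro hy
      refine ⟨2 * Real.log (y / Real.sqrt u), ?_⟩
      have h1 : (2 * Real.log (y / Real.sqrt u))/2 = Real.log (y / Real.sqrt u) := by ring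
      rw [hψ]
      simp only
      rw [h1, Real.exp_log (by positivity)]
      field_simp
  have hderiv : ∀ t : ℝ, HasDerivAt ψ (Real.sqrt u * rexp (t/2) / 2) t := by
    intro t
    have h1 : HasDerivAt (fun s : ℝ => s/2) (1/2) t := (hasDerivAt_id t).div_const 2
    have h2 := h1.exp
    have h3 := h2.const_mul (Real.sqrt u)
    exact h3.congr_deriv (by ring)
  -- even function step
  rw [lintegral_even _ (fun x => by
    rw [show 1/((-x)*z) = -(1/(x*z)) by ring, gauss_even, gauss_even, abs_neg])]
  rw [← himg, lintegral_image_eq_lintegral_abs_deriv_mul'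
    (f' := fun t => Real.sqrt u * rexp (t/2) / 2) MeasurableSet.univ
    (fun t _ => (hderiv t).hasDerivWithinAt) (hmono.injective.injOn) _]
  rw [setLIntegral_univ]
  have hpt : ∀ t : ℝ, ENNReal.ofReal |Real.sqrt u * rexp (t/2) / 2| *
      ENNReal.ofReal (gaussianPDFReal 0 1 (ψ t) *
        (gaussianPDFReal 0 1 (1/(ψ t*z)) / (|ψ t| * z^2)))
      = ENNReal.ofReal ((1/(4*π*z^2)) * rexp (-(u * Real.cosh t))) := by
    intro t
    rw [← ENNReal.ofReal_mul (abs_nonneg _), pointwise_calc hu hz hu_def]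
  simp_rw [hpt]
  rw [bessel_sub hu (by positivity), ← ENNReal.ofReal_ofNat 2,
    ← ENNReal.ofReal_mul (by norm_num)]
  congr 1
  have hpi := Real.pi_pos
  field_simp
  ring

noncomputable def auxK (x z : ℝ) : ℝ≥0∞ :=
  if z = 0 then 0 else ENNReal.ofReal (gaussianPDFReal 0 1 (1/(x*z)) / (|x| * z^2))

noncomputable def auxg (z : ℝ) : ℝ :=
  if z = 0 then 0 else (1/(π * z^2)) * besselK0 (1/|z|)

theorem key2 {x : ℝ} (hx : x ≠ 0) (a : ℝ) :
    gaussianReal 0 1 {y | 1/(x*y) ≤ a} = ∫⁻ z in Iic a, auxK x z := by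
  simp only [auxK]
  have h0ae : ∀ᵐ z : ℝ, z ≠ (0:ℝ) := by
    refine ae_iff.2 ?_
    simpa using Real.volume_singleton
  have hSd : (({y : ℝ | 1/(x*y) ≤ a} \ ({0} : Set ℝ) : Set ℝ)) =ᵐ[volume] {y : ℝ | 1/(x*y) ≤ a} := by
    exact diff_ae_eq_self.2 (measure_mono_null inter_subset_right Real.volume_singleton)
  have hId : (Iic a \ {0} : Set ℝ) =ᵐ[volume] Iic a := by
    exact diff_ae_eq_self.2 (measure_mono_null inter_subset_right Real.volume_singleton)
  have himg : (fun z : ℝ => 1/(x*z)) '' (Iic a \ {0}) = {y : ℝ | 1/(x*y) ≤ a} \ ({0} : Set ℝ) := by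
    ext y
    simp only [mem_image, mem_diff, mem_Iic, mem_singleton_iff, mem_setOf_eq]
    constructor
    · rintro ⟨z, ⟨hza, hz0⟩, rfl⟩
      have hxz : x * z ≠ 0 := mul_ne_zero hx hz0
      refine ⟨?_, one_div_ne_zero hxz⟩
      rw [show 1/(x*(1/(x*z))) = z by field_simp]
      exact hza
    · rintro ⟨hya, hy0⟩
      have hxy : x * y ≠ 0 := mul_ne_zero hx hy0
      exact ⟨1/(x*y), ⟨hya, one_div_ne_zero hxy⟩, by field_simp⟩
  have hderiv : ∀ z ∈ (Iic a \ {0} : Set ℝ),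
      HasDerivWithinAt (fun z : ℝ => 1/(x*z)) (-x/(x*z)^2) (Iic a \ {0}) z := by
    intro z hz
    have hz0 : z ≠ 0 := hz.2
    have h1 : HasDerivAt (fun z : ℝ => x*z) x z := by
      simpa using (hasDerivAt_id z).const_mul x
    have h2 := h1.inv (mul_ne_zero hx hz0)
    have h3 : HasDerivAt (fun z : ℝ => 1/(x*z)) (-x/(x*z)^2) z := by
      simp_rw [one_div]
      exact h2
    exact h3.hasDerivWithinAt
  have hinj : InjOn (fun z : ℝ => 1/(x*z)) (Iic a \ {0}) := by
    rintro z₁ ⟨-, h₁⟩ z₂ ⟨-, h₂⟩ h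
    simp only [one_div] at h
    exact mul_left_cancel₀ hx (inv_injective h)
  rw [gaussianReal_apply 0 one_ne_zero, ← setLIntegral_congr hSd, ← himg,
    lintegral_image_eq_lintegral_abs_deriv_mul'
      (measurableSet_Iic.diff (measurableSet_singleton 0)) hderiv hinj,
    setLIntegral_congr hId]
  refine lintegral_congr_ae (ae_restrict_of_ae ?_)
  filter_upwards [h0ae] with z hz0
  rw [if_neg hz0]
  simp only [gaussianPDF]
  rw [← ENNReal.ofReal_mul (abs_nonneg _)]
  have h1 : |-x/(x*z)^2| = 1/(|x| * z^2) := by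
    rw [abs_div, abs_neg, abs_of_nonneg (sq_nonneg (x*z)), mul_pow, ← sq_abs x]
    rw [div_eq_div_iff (by positivity) (by have := abs_pos.2 hx; positivity)]
    ring
  rw [h1]
  congr 1
  field_simp

theorem auxK_pair_measurable : Measurable fun p : ℝ×ℝ => auxK p.1 p.2 := by
  have hcond : MeasurableSet {p : ℝ×ℝ | p.2 = 0} :=
    measurable_snd (measurableSet_singleton 0)
  have hm1 : Measurable fun p : ℝ×ℝ => 1/(p.1*p.2) := by
    simp_rw [one_div]
    exact (measurable_fst.mul measurable_snd).inv
  have hbr : Measurable fun p : ℝ×ℝ =>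
      ENNReal.ofReal (gaussianPDFReal 0 1 (1/(p.1*p.2)) / (|p.1| * p.2^2)) :=
    (((measurable_gaussianPDFReal 0 1).comp hm1).div
      ((measurable_fst.abs).mul (measurable_snd.pow_const 2))).ennreal_ofReal
  simp only [auxK]
  exact Measurable.ite hcond measurable_const hbr

theorem gaussianPDF_ne_top (x : ℝ) : gaussianPDF 0 1 x ≠ ⊤ := by
  simp [gaussianPDF]

theorem auxg_nonneg (z : ℝ) : 0 ≤ auxg z := by
  rw [auxg]
  by_cases hz : z = 0
  · simp [hz]
  · rw [if_neg hz]
    have h1 := besselK0_nonneg (1/|z|)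
    have h2 : (0:ℝ) < z^2 := by positivity
    have := Real.pi_pos
    positivity

theorem key3 (z : ℝ) :
    (∫⁻ x, gaussianPDF 0 1 x * auxK x z) = ENNReal.ofReal (auxg z) := by
  by_cases hz : z = 0
  · simp [auxK, auxg, hz]
  · simp only [auxK, auxg, if_neg hz, gaussianPDF]
    simp_rw [← ENNReal.ofReal_mul (gaussianPDFReal_nonneg 0 1 _)]
    exact key1 hz

set_option maxHeartbeats 1000000 in
/-- The reciprocal of the product of two independent standard normals has density
`z ↦ (1/(π z²)) K₀(1/|z|)` (with value `0` at `z = 0`). -/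
theorem pdf_reciprocal_product_two_normals
    {Ω : Type*} [MeasureSpace Ω] [IsProbabilityMeasure (ℙ : Measure Ω)]
    (Y₁ Y₂ : Ω → ℝ) (hY₁ : Measurable Y₁) (hY₂ : Measurable Y₂)
    (hlaw₁ : Measure.map Y₁ ℙ = gaussianReal 0 1)
    (hlaw₂ : Measure.map Y₂ ℙ = gaussianReal 0 1)
    (hindep : IndepFun Y₁ Y₂ ℙ) :
    ∀ a : ℝ, ℙ {ω | 1 / (Y₁ ω * Y₂ ω) ≤ a} =
      ENNReal.ofReal (∫ z in Set.Iic a,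
        if z = 0 then 0 else (1 / (Real.pi * z ^ 2)) * besselK0 (1 / |z|)) := by
  intro a
  have h0ae : ∀ᵐ z : ℝ, z ≠ (0:ℝ) := by
    refine ae_iff.2 ?_
    simpa using Real.volume_singleton
  have hSm : MeasurableSet {p : ℝ×ℝ | 1/(p.1*p.2) ≤ a} := by
    have hm : Measurable fun p : ℝ×ℝ => 1/(p.1*p.2) := by
      simp_rw [one_div]
      exact (measurable_fst.mul measurable_snd).inv
    exact hm measurableSet_Iic
  have hFm' : Measurable fun p : ℝ×ℝ => gaussianPDF 0 1 p.1 * auxK p.1 p.2 :=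
    ((measurable_gaussianPDF 0 1).comp measurable_fst).mul auxK_pair_measurable
  have hmap : Measure.map (fun ω => (Y₁ ω, Y₂ ω)) ℙ
      = (gaussianReal 0 1).prod (gaussianReal 0 1) := by
    rw [(indepFun_iff_map_prod_eq_prod_map_map hY₁.aemeasurable hY₂.aemeasurable).mp hindep,
      hlaw₁, hlaw₂]
  have h1 : ℙ {ω | 1/(Y₁ ω * Y₂ ω) ≤ a}
      = ((gaussianReal 0 1).prod (gaussianReal 0 1)) {p : ℝ×ℝ | 1/(p.1*p.2) ≤ a} := by
    rw [← hmap, Measure.map_apply (hY₁.prodMk hY₂) hSm]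
    rfl
  have h2 : ((gaussianReal 0 1).prod (gaussianReal 0 1)) {p : ℝ×ℝ | 1/(p.1*p.2) ≤ a}
      = ∫⁻ x, gaussianReal 0 1 {y | 1/(x*y) ≤ a} ∂(gaussianReal 0 1) := by
    rw [Measure.prod_apply hSm]
    rfl
  have hFmeas : Measurable fun x : ℝ => gaussianReal 0 1 {y : ℝ | 1/(x*y) ≤ a} :=
    measurable_measure_prodMk_left hSm
  have h3 : ∫⁻ x, gaussianReal 0 1 {y | 1/(x*y) ≤ a} ∂(gaussianReal 0 1)
      = ∫⁻ x, gaussianPDF 0 1 x * gaussianReal 0 1 {y | 1/(x*y) ≤ a} := by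
    have h := lintegral_withDensity_eq_lintegral_mul volume
      (measurable_gaussianPDF 0 1) hFmeas
    rw [← gaussianReal_of_var_ne_zero 0 one_ne_zero] at h
    exact h
  have h4 : ∫⁻ x, gaussianPDF 0 1 x * gaussianReal 0 1 {y | 1/(x*y) ≤ a}
      = ∫⁻ x, ∫⁻ z in Iic a, gaussianPDF 0 1 x * auxK x z := by
    refine lintegral_congr_ae ?_
    filter_upwards [h0ae] with x hx
    rw [key2 hx a, ← lintegral_const_mul' _ _ (gaussianPDF_ne_top x)]
  have h5 : ∫⁻ x, ∫⁻ z in Iic a, gaussianPDF 0 1 x * auxK x z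
      = ∫⁻ z in Iic a, ∫⁻ x, gaussianPDF 0 1 x * auxK x z :=
    lintegral_lintegral_swap hFm'.aemeasurable
  have hchain : ℙ {ω | 1/(Y₁ ω * Y₂ ω) ≤ a} = ∫⁻ z in Iic a, ENNReal.ofReal (auxg z) := by
    rw [h1, h2, h3, h4, h5]
    exact lintegral_congr fun z => key3 z
  have huncurry : Measurable (Function.uncurry fun z x : ℝ => gaussianPDF 0 1 x * auxK x z) := by
    rw [Function.uncurry_def]
    exact ((measurable_gaussianPDF 0 1).comp measurable_snd).mul
      (auxK_pair_measurable.comp measurable_swap)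
  have hGm : Measurable fun z : ℝ => ∫⁻ x, gaussianPDF 0 1 x * auxK x z :=
    Measurable.lintegral_prod_right huncurry
  have hgm : Measurable auxg := by
    have heq : auxg = fun z => ((fun z => ∫⁻ x, gaussianPDF 0 1 x * auxK x z) z).toReal := by
      funext z
      show auxg z = (∫⁻ x, gaussianPDF 0 1 x * auxK x z).toReal
      rw [key3 z, ENNReal.toReal_ofReal (auxg_nonneg z)]
    rw [heq]
    exact hGm.ennreal_toReal
  have hfin : (∫⁻ z in Iic a, ENNReal.ofReal (auxg z)) ≠ ⊤ := by
    rw [← hchain]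
    exact (measure_lt_top ℙ _).ne
  have hint : ∫ z in Iic a, auxg z = (∫⁻ z in Iic a, ENNReal.ofReal (auxg z)).toReal := by
    rw [integral_eq_lintegral_of_nonneg_ae (ae_of_all _ auxg_nonneg)
      hgm.aestronglyMeasurable.restrict]
  have hgoal : (∫ z in Iic a,
      if z = 0 then (0:ℝ) else (1 / (Real.pi * z ^ 2)) * besselK0 (1 / |z|))
      = ∫ z in Iic a, auxg z := by
    simp only [auxg]
  rw [hgoal, hint, ENNReal.ofReal_toReal hfin]
  exact hchain
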